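/- Fix ℓ ∈ ℕ₀ and d = (d_1,…,d_ℓ), r = (r_1,…,r_ℓ) ∈ ℕ^ℓ with d_i ≥ r_i for all i ∈ [ℓ], and set m_ℓ := Σ_{k=1}^ℓ (r_k − 1)·∏_{i=k+1}^ℓ d_i. If n ≥ m_ℓ, then for every v ∈ ℝ^n and every subset I ⊆ [n] with |I| = m_ℓ there exists an (actual) polytope P belonging to the class Q̂_ℓ whose affine hull equals v + span{e_i : i ∈ I}, where e_1,…,e_n is the standard basis of ℝ^n. -/

import Mathlib

open Pointwise

noncomputable section SparseMaxout

/-- Vectors in `ℝ^n`. -/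
abbrev Vec (n : ℕ) := Fin n → ℝ

/-- A polytope is the convex hull of a finite nonempty set of points. -/
def IsPolytope {n : ℕ} (P : Set (Vec n)) : Prop :=
  ∃ s : Finset (Vec n), s.Nonempty ∧ P = convexHull ℝ (s : Set (Vec n))

/-- A simplex is the convex hull of a finite nonempty affinely independent set of points. -/
def IsSimplex {n : ℕ} (S : Set (Vec n)) : Prop :=
  ∃ (k : ℕ) (pts : Fin k → Vec n), 0 < k ∧ AffineIndependent ℝ pts ∧
    S = convexHull ℝ (Set.range pts)

/-- The support function `f_P(x) = max_{a ∈ P} ⟨a, x⟩` of a set `P`. -/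
def suppFn {n : ℕ} (P : Set (Vec n)) (x : Vec n) : ℝ :=
  sSup ((fun a => ∑ i, a i * x i) '' P)

/-- The dimension of a polytope: the dimension of its affine hull. -/
def polyDim {n : ℕ} (P : Set (Vec n)) : ℕ :=
  Module.finrank ℝ (affineSpan ℝ P).direction

/-- A (representative of a) virtual polytope: a pair `(P, Q)` standing for `P - Q`. -/
abbrev VP (n : ℕ) := Set (Vec n) × Set (Vec n)

/-- Two pairs represent the same virtual polytope: `P₁ - Q₁ = P₂ - Q₂` iff
`P₁ + Q₂ = P₂ + Q₁` (Minkowski sums). -/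
def vEquiv {n : ℕ} (A B : VP n) : Prop :=
  A.1 + B.2 = B.1 + A.2

/-- Both components are polytopes. -/
def IsPolyPair {n : ℕ} (A : VP n) : Prop :=
  IsPolytope A.1 ∧ IsPolytope A.2

/-- Scalar multiple of a virtual polytope: `λ(P - Q) := λP - λQ`. -/
def vSMul {n : ℕ} (c : ℝ) (A : VP n) : VP n := (c • A.1, c • A.2)

/-- Convex hull of finitely many virtual polytopes:
`conv(P₁-Q₁, …, P_m-Q_m) := conv(⋃ᵢ (Pᵢ + Σ_{k≠i} Q_k)) - Σ_k Q_k`. -/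
def vConv {n m : ℕ} (V : Fin m → VP n) : VP n :=
  (convexHull ℝ (⋃ i, ((V i).1 + ∑ k ∈ Finset.univ.erase i, (V k).2)),
   ∑ k, (V k).2)

/-- The dimension of a virtual polytope: `min{dim(A + B) : V = A - B}` over
polytope representations. -/
def vDim {n : ℕ} (V : VP n) : ℕ :=
  sInf {m | ∃ A B : Set (Vec n), IsPolytope A ∧ IsPolytope B ∧
    vEquiv (A, B) V ∧ polyDim (A + B) = m}

/-- Support function of a virtual polytope: `f_{P-Q} := f_P - f_Q`. -/
def vSuppFn {n : ℕ} (V : VP n) (x : Vec n) : ℝ :=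
  suppFn V.1 x - suppFn V.2 x

/-- The recursively defined classes `Q̂_ℓ` of virtual polytopes dual to sparse maxout
networks with indegree constraints `d` and ranks `r` (layer `k` uses `d k`, `r k`);
membership is up to equality of virtual polytopes. -/
def Qhat (n : ℕ) (d r : ℕ → ℕ) : ℕ → Set (VP n)
  | 0 => {V | IsPolyPair V ∧ ∃ v : Vec n, vEquiv V ({v}, {0})}
  | (k+1) => {V | IsPolyPair V ∧
      ∃ (α : Fin (r (k+1)) → Fin (d (k+1)) → ℝ) (W : Fin (d (k+1)) → VP n),
        (∀ j, W j ∈ Qhat n d r k) ∧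
        vEquiv V (vConv (fun i => ∑ j, vSMul (α i j) (W j)))}

/-- `Q_n(ℓ,d,r)`: finite real linear combinations of elements of `Q̂_ℓ`. -/
def Qfull (n : ℕ) (d r : ℕ → ℕ) (ℓ : ℕ) : Set (VP n) :=
  {V | IsPolyPair V ∧ ∃ (p : ℕ) (c : Fin p → ℝ) (W : Fin p → VP n),
    (∀ i, W i ∈ Qhat n d r ℓ) ∧ vEquiv V (∑ i, vSMul (c i) (W i))}

/-- `m_ℓ = Σ_{k=1}^ℓ (r_k - 1) ∏_{i=k+1}^ℓ d_i`. -/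
def mval (d r : ℕ → ℕ) (ℓ : ℕ) : ℕ :=
  ∑ k ∈ Finset.Icc 1 ℓ, (r k - 1) * ∏ i ∈ Finset.Icc (k+1) ℓ, d i

/-- The recursively defined classes `N̂_ℓ` of functions computed by a single output
neuron of an indegree-`d`-constrained rank-`r` maxout network with `ℓ` hidden layers. -/
def Nhat (n : ℕ) (d r : ℕ → ℕ) : ℕ → Set ((Vec n) → ℝ)
  | 0 => {f | ∃ v : Vec n, f = fun x => ∑ i, v i * x i}
  | (k+1) => {f | ∃ (α : Fin (r (k+1)) → Fin (d (k+1)) → ℝ)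
      (g : Fin (d (k+1)) → (Vec n) → ℝ),
      (∀ j, g j ∈ Nhat n d r k) ∧
      f = fun x => ⨆ i, ∑ j, α i j * g j x}

/-- `N_n(ℓ,d,r)`: finite real linear combinations of functions in `N̂_ℓ`. -/
def Nfull (n : ℕ) (d r : ℕ → ℕ) (ℓ : ℕ) : Set ((Vec n) → ℝ) :=
  {f | ∃ (p : ℕ) (c : Fin p → ℝ) (g : Fin p → (Vec n) → ℝ),
    (∀ i, g i ∈ Nhat n d r ℓ) ∧ f = fun x => ∑ i, c i * g i x}

/-- Unconstrained single-neuron classes `N̂_ℓ` (no indegree constraint). -/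
def NhatU (n : ℕ) (r : ℕ → ℕ) : ℕ → Set ((Vec n) → ℝ)
  | 0 => {f | ∃ v : Vec n, f = fun x => ∑ i, v i * x i}
  | (k+1) => {f | ∃ (m : ℕ) (α : Fin (r (k+1)) → Fin m → ℝ)
      (g : Fin m → (Vec n) → ℝ),
      (∀ j, g j ∈ NhatU n r k) ∧
      f = fun x => ⨆ i, ∑ j, α i j * g j x}

/-- `N_n(ℓ,r)`: finite real linear combinations of functions in the unconstrained `N̂_ℓ`. -/
def NfullU (n : ℕ) (r : ℕ → ℕ) (ℓ : ℕ) : Set ((Vec n) → ℝ) :=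
  {f | ∃ (p : ℕ) (c : Fin p → ℝ) (g : Fin p → (Vec n) → ℝ),
    (∀ i, g i ∈ NhatU n r ℓ) ∧ f = fun x => ∑ i, c i * g i x}

/-- `MAX_n(m)`: finite real linear combinations of maxima of at most `m` linear functions. -/
def MAXn (n m : ℕ) : Set ((Vec n) → ℝ) :=
  {f | ∃ (p : ℕ) (β : Fin p → ℝ) (a : Fin p → Fin m → Vec n),
    f = fun x => ∑ i, β i * ⨆ j, ∑ t, a i j t * x t}
lemma isPolytope_singleton {n : ℕ} (v : Vec n) : IsPolytope ({v} : Set (Vec n)) :=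
  ⟨{v}, Finset.singleton_nonempty v, by simp⟩

lemma IsPolytope.nonempty {n} {A : Set (Vec n)} (h : IsPolytope A) : A.Nonempty := by
  obtain ⟨s, hs, rfl⟩ := h
  exact convexHull_nonempty_iff.2 (by exact_mod_cast hs)

lemma IsPolytope.add {n} {A B : Set (Vec n)} (hA : IsPolytope A) (hB : IsPolytope B) :
    IsPolytope (A + B) := by
  classical
  obtain ⟨s, hs, rfl⟩ := hA; obtain ⟨t, ht, rfl⟩ := hB
  exact ⟨s + t, hs.add ht, by rw [Finset.coe_add, convexHull_add]⟩

lemma IsPolytope.smul {n} (c : ℝ) {A : Set (Vec n)} (hA : IsPolytope A) :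
    IsPolytope (c • A) := by
  classical
  obtain ⟨s, hs, rfl⟩ := hA
  exact ⟨c • s, hs.smul_finset, by rw [Finset.coe_smul_finset, convexHull_smul]⟩

lemma isPolytope_zero {n : ℕ} : IsPolytope (0 : Set (Vec n)) := by
  rw [← Set.singleton_zero]; exact isPolytope_singleton 0

lemma isPolytope_sum {n m : ℕ} (S : Fin m → Set (Vec n)) (h : ∀ j, IsPolytope (S j)) :
    IsPolytope (∑ j, S j) :=
  Finset.sum_induction S IsPolytope (fun _ _ ha hb => ha.add hb) isPolytope_zero
    (fun j _ => h j)

lemma isPolytope_convexHull_iUnion {n m : ℕ} (hm : 0 < m) (S : Fin m → Set (Vec n))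
    (h : ∀ i, IsPolytope (S i)) : IsPolytope (convexHull ℝ (⋃ i, S i)) := by
  classical
  choose s hne hs using h
  refine ⟨Finset.univ.biUnion s, ?_, ?_⟩
  · obtain ⟨x, hx⟩ := hne ⟨0, hm⟩
    exact ⟨x, Finset.mem_biUnion.2 ⟨⟨0, hm⟩, Finset.mem_univ _, hx⟩⟩
  · have hcoe : ((Finset.univ.biUnion s : Finset (Vec n)) : Set (Vec n))
        = ⋃ i, (s i : Set (Vec n)) := by
      ext x; simp [Finset.mem_biUnion]
    rw [hcoe]
    apply subset_antisymm
    · refine convexHull_min (Set.iUnion_subset fun i => ?_) (convex_convexHull ℝ _)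
      rw [hs i]
      exact convexHull_mono (Set.subset_iUnion (fun i => (s i : Set (Vec n))) i)
    · apply convexHull_mono
      refine Set.iUnion_subset fun i => subset_trans ?_ (Set.subset_iUnion S i)
      rw [hs i]; exact subset_convexHull ℝ _

lemma mval_succ (d r : ℕ → ℕ) (ℓ : ℕ) :
    mval d r (ℓ+1) = (r (ℓ+1) - 1) + d (ℓ+1) * mval d r ℓ := by
  unfold mval
  rw [Finset.sum_Icc_succ_top (by omega : 1 ≤ ℓ+1), Finset.mul_sum, add_comm]
  congr 1
  · rw [Finset.Icc_eq_empty (by omega : ¬ (ℓ+1+1 ≤ ℓ+1)), Finset.prod_empty, mul_one]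
  · refine Finset.sum_congr rfl fun k hk => ?_
    have hk' : k ≤ ℓ := (Finset.mem_Icc.mp hk).2
    rw [Finset.prod_Icc_succ_top (by omega : k+1 ≤ ℓ+1)]
    ring

lemma key_span {n : ℕ} (d r : ℕ → ℕ) (hr : ∀ k, 1 ≤ r k) (hdr : ∀ k, r k ≤ d k) :
    ∀ ℓ : ℕ, ∀ v : Vec n, ∀ I : Finset (Fin n), I.card = mval d r ℓ →
    ∃ P : Set (Vec n), IsPolytope P ∧ (P, ({0} : Set (Vec n))) ∈ Qhat n d r ℓ ∧
      (∀ x ∈ P, x - v ∈ Submodule.span ℝ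
        ((fun i => Pi.single i (1:ℝ)) '' (I : Set (Fin n)))) ∧
      ∀ t ∈ I, (Pi.single t (1:ℝ)) ∈ vectorSpan ℝ P := by
  classical
  intro ℓ
  induction ℓ with
  | zero =>
    intro v I hI
    have hI0 : I = ∅ := Finset.card_eq_zero.mp (by simpa [mval] using hI)
    subst hI0
    refine ⟨{v}, isPolytope_singleton v, ?_, ?_, by simp⟩
    · exact ⟨⟨isPolytope_singleton v, isPolytope_singleton 0⟩, v, rfl⟩
    · intro x hx
      rw [Set.mem_singleton_iff] at hx
      simp [hx]
  | succ ℓ IH =>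
    intro v I hI
    set R := r (ℓ+1) with hRdef
    set D := d (ℓ+1) with hDdef
    set M := mval d r ℓ with hMdef
    have hR : 1 ≤ R := hr _
    have hD : R ≤ D := hdr _
    have hN : I.card = (R - 1) + D * M := by rw [hI, mval_succ]
    let f : Fin ((R-1) + D*M) → Fin n := fun u => (I.orderIsoOfFin hN u : Fin n)
    have hfmem : ∀ u, f u ∈ I := fun u => (I.orderIsoOfFin hN u).2
    have hfinj : Function.Injective f := fun a b h =>
      (I.orderIsoOfFin hN).injective (Subtype.ext h)
    have hfsurj : ∀ t ∈ I, ∃ u, f u = t := fun t ht =>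
      ⟨(I.orderIsoOfFin hN).symm ⟨t, ht⟩, by
        show ((I.orderIsoOfFin hN) ((I.orderIsoOfFin hN).symm ⟨t, ht⟩) : Fin n) = t
        rw [OrderIso.apply_symm_apply]⟩
    have hcb : ∀ (j : Fin D) (s : Fin M), (R-1) + (j:ℕ)*M + (s:ℕ) < (R-1) + D*M := by
      intro j s
      have hs := s.isLt
      have hj : (j:ℕ) + 1 ≤ D := j.isLt
      have h2 : ((j:ℕ)+1) * M ≤ D * M := Nat.mul_le_mul_right M hj
      have h3 : ((j:ℕ)+1) * M = (j:ℕ)*M + M := by ring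
      omega
    let J : Fin D → Finset (Fin n) := fun j =>
      Finset.image (fun s : Fin M => f ⟨(R-1) + (j:ℕ)*M + (s:ℕ), hcb j s⟩) Finset.univ
    have hJcard : ∀ j, (J j).card = M := by
      intro j
      rw [Finset.card_image_of_injective _ ?_, Finset.card_univ, Fintype.card_fin]
      intro a b hab
      have := hfinj hab
      have : (R-1) + (j:ℕ)*M + (a:ℕ) = (R-1) + (j:ℕ)*M + (b:ℕ) := congrArg Fin.val this
      exact Fin.ext (by omega)
    have hJsub : ∀ j, (J j) ⊆ I := by
      intro j t ht
      obtain ⟨s, _, rfl⟩ := Finset.mem_image.mp ht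
      exact hfmem _
    have hRN : ∀ s : Fin (R-1), (s:ℕ) < (R-1) + D*M := fun s => by have := s.isLt; omega
    let kk : Fin (R-1) → Fin n := fun s => f ⟨(s:ℕ), hRN s⟩
    have hkk : ∀ s, kk s ∈ I := fun s => hfmem _
    let e : Fin n → Vec n := fun i => Pi.single i 1
    let w : Fin D → Vec n := fun j =>
      if h : (j:ℕ) < R-1 then e (kk ⟨(j:ℕ), h⟩) else if (j:ℕ) = D-1 then v else 0
    obtain ⟨P, hPpoly, hPQ, hPsub, hPvs⟩ :
        ∃ P : Fin D → Set (Vec n), (∀ j, IsPolytope (P j)) ∧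
          (∀ j, (P j, ({0} : Set (Vec n))) ∈ Qhat n d r ℓ) ∧
          (∀ j, ∀ x ∈ P j, x - w j ∈ Submodule.span ℝ
            ((fun i => Pi.single i (1:ℝ)) '' ((J j : Set (Fin n))))) ∧
          (∀ j, ∀ t ∈ J j, (Pi.single t (1:ℝ)) ∈ vectorSpan ℝ (P j)) := by
      choose P h1 h2 h3 h4 using fun j : Fin D => IH (w j) (J j) (hJcard j)
      exact ⟨P, h1, h2, h3, h4⟩
    let α : Fin R → Fin D → ℝ := fun i j => if (j:ℕ)+1 = (i:ℕ) then 2 else 1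
    let A : Fin R → Set (Vec n) := fun i => ∑ j, α i j • P j
    have hApoly : ∀ i, IsPolytope (A i) :=
      fun i => isPolytope_sum _ fun j => (hPpoly j).smul _
    set Pbig : Set (Vec n) := convexHull ℝ (⋃ i, A i) with hPbig
    have hPbigpoly : IsPolytope Pbig := isPolytope_convexHull_iUnion hR _ hApoly
    -- basic facts about α
    have hα0 : ∀ j, α (⟨0, hR⟩ : Fin R) j = 1 := by
      intro j; simp only [α]; rw [if_neg (by omega)]
    have hA0 : A ⟨0, hR⟩ = ∑ j, P j := by
      refine Finset.sum_congr rfl fun j _ => ?_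
      rw [hα0 j, one_smul]
    have hPne : ∀ j, (P j).Nonempty := fun j => (hPpoly j).nonempty
    choose z hz using hPne
    have hAsub : ∀ i, A i ⊆ Pbig := fun i =>
      (Set.subset_iUnion A i).trans (subset_convexHull ℝ _)
    -- membership in Qhat (ℓ+1)
    have hzero : ∀ c : ℝ, c • ({0} : Set (Vec n)) = 0 := by
      intro c; rw [Set.smul_set_singleton, smul_zero, Set.singleton_zero]
    have hQmem : (Pbig, ({0} : Set (Vec n))) ∈ Qhat n d r (ℓ+1) := by
      refine ⟨⟨hPbigpoly, isPolytope_singleton 0⟩, α, fun j => (P j, ({0} : Set (Vec n))),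
        hPQ, ?_⟩
      have hF : ∀ i : Fin R, (∑ j, vSMul (α i j) (P j, ({0} : Set (Vec n))))
          = (A i, (0 : Set (Vec n))) := by
        intro i
        have : ∀ j : Fin D, vSMul (α i j) (P j, ({0} : Set (Vec n)))
            = (α i j • P j, (0 : Set (Vec n))) := by
          intro j; unfold vSMul; rw [hzero]
        rw [Finset.sum_congr rfl fun j _ => this j]
        ext x
        · rw [Prod.fst_sum]
        · rw [Prod.snd_sum, Finset.sum_const_zero]
      rw [show (fun i => ∑ j, vSMul (α i j) (P j, ({0} : Set (Vec n)))) = fun i => (A i, (0 : Set (Vec n))) from funext hF]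
      unfold vEquiv vConv
      simp only [Finset.sum_const_zero, add_zero, ← hPbig, Set.singleton_zero]
      exact hPbig
    refine ⟨Pbig, hPbigpoly, hQmem, ?_, ?_⟩
    · -- everything lies in v + span
      set U := Submodule.span ℝ ((fun i => Pi.single i (1:ℝ)) '' (I : Set (Fin n))) with hU
      have heU : ∀ t ∈ I, e t ∈ U := fun t ht =>
        Submodule.subset_span ⟨t, ht, rfl⟩
      have hJU : ∀ j, ∀ x ∈ P j, x - w j ∈ U := by
        intro j x hx
        refine Submodule.span_mono (Set.image_mono ?_) (hPsub j x hx)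
        exact_mod_cast hJsub j
      have hwU : ∀ (i : Fin R) (j : Fin D),
          α i j • w j - (if (j:ℕ) = D-1 then v else 0) ∈ U := by
        intro i j
        by_cases h : (j:ℕ) < R-1
        · have hne : ¬ ((j:ℕ) = D-1) := by omega
          rw [if_neg hne]
          simp only [w, dif_pos h, sub_zero]
          exact U.smul_mem _ (heU _ (hkk _))
        · by_cases h2 : (j:ℕ) = D-1
          · have hα1 : α i j = 1 := by
              simp only [α]; rw [if_neg (by have := i.isLt; omega)]
            simp only [w, dif_neg h, if_pos h2, hα1, one_smul, sub_self]
            exact U.zero_mem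
          · simp only [w, dif_neg h, if_neg h2, smul_zero, sub_zero]
            exact U.zero_mem
      have hsumif : (∑ j : Fin D, (if (j:ℕ) = D-1 then v else 0)) = v := by
        have hD1 : D - 1 < D := by omega
        rw [Finset.sum_eq_single (⟨D-1, hD1⟩ : Fin D)]
        · simp
        · intro b _ hb
          rw [if_neg (fun hh => hb (Fin.ext hh))]
        · intro h; exact absurd (Finset.mem_univ _) h
      have hAU : ∀ i, A i ⊆ {x : Vec n | x - v ∈ U} := by
        intro i x hx
        rw [Set.mem_fintype_sum] at hx
        obtain ⟨g, hg, rfl⟩ := hx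
        choose y hy hgy using fun j => Set.mem_smul_set.mp (hg j)
        have hterm : ∀ j : Fin D, g j - (if (j:ℕ) = D-1 then v else 0) ∈ U := by
          intro j
          have : g j - (if (j:ℕ) = D-1 then v else 0)
              = (α i j • (y j - w j)) + (α i j • w j - (if (j:ℕ) = D-1 then v else 0)) := by
            rw [← hgy j, smul_sub]; abel
          rw [this]
          exact U.add_mem (U.smul_mem _ (hJU j _ (hy j))) (hwU i j)
        have : (∑ j, g j) - v = ∑ j, (g j - (if (j:ℕ) = D-1 then v else 0)) := by
          rw [Finset.sum_sub_distrib, hsumif]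
        rw [Set.mem_setOf_eq, this]
        exact Submodule.sum_mem _ fun j _ => hterm j
      have hconvU : Convex ℝ {x : Vec n | x - v ∈ U} := by
        intro x hx y hy a b ha hb hab
        rw [Set.mem_setOf_eq] at *
        have hv' : a • v + b • v = v := by rw [← add_smul, hab, one_smul]
        have h5 : a • (x - v) + b • (y - v) = a • x + b • y - (a • v + b • v) := by
          rw [smul_sub, smul_sub]; abel
        have : a • x + b • y - v = a • (x - v) + b • (y - v) := by
          rw [h5, hv']
        rw [this]
        exact U.add_mem (U.smul_mem _ hx) (U.smul_mem _ hy)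
      exact fun x hx => convexHull_min (Set.iUnion_subset hAU) hconvU hx
    · -- vectorSpan
      have hdiff : ∀ j₀ : Fin D, ∀ p ∈ P j₀, ∀ q ∈ P j₀, p - q ∈ vectorSpan ℝ Pbig := by
        intro j₀ p hp q hq
        let gp : Fin D → Vec n := fun j => if j = j₀ then p else z j
        let gq : Fin D → Vec n := fun j => if j = j₀ then q else z j
        have hgp : (∑ j, gp j) ∈ Pbig := by
          refine hAsub ⟨0, hR⟩ ?_
          rw [hA0]
          refine Set.finset_sum_mem_finset_sum _ _ _ fun j _ => ?_
          by_cases h : j = j₀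
          · subst h; simp only [gp, if_pos rfl]; exact hp
          · simp only [gp, if_neg h]; exact hz j
        have hgq : (∑ j, gq j) ∈ Pbig := by
          refine hAsub ⟨0, hR⟩ ?_
          rw [hA0]
          refine Set.finset_sum_mem_finset_sum _ _ _ fun j _ => ?_
          by_cases h : j = j₀
          · subst h; simp only [gq, if_pos rfl]; exact hq
          · simp only [gq, if_neg h]; exact hz j
        have hd : (∑ j, gp j) - (∑ j, gq j) = p - q := by
          rw [← Finset.sum_sub_distrib]
          rw [Finset.sum_eq_single j₀]
          · simp [gp, gq]
          · intro b _ hb; simp [gp, gq, if_neg hb]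
          · intro h; exact absurd (Finset.mem_univ _) h
        have := vsub_mem_vectorSpan ℝ hgp hgq
        rwa [vsub_eq_sub, hd] at this
      have hJvs : ∀ j₀ : Fin D, Submodule.span ℝ
          ((fun i => Pi.single i (1:ℝ)) '' ((J j₀ : Set (Fin n)))) ≤ vectorSpan ℝ Pbig := by
        intro j₀
        have h1 : vectorSpan ℝ (P j₀) ≤ vectorSpan ℝ Pbig := by
          rw [vectorSpan_def]
          refine Submodule.span_le.2 ?_
          rintro x hx
          rw [Set.mem_vsub] at hx
          obtain ⟨p, hp, q, hq, rfl⟩ := hx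
          have := hdiff j₀ p hp q hq
          rwa [vsub_eq_sub]
        refine le_trans ?_ h1
        refine Submodule.span_le.2 ?_
        rintro x ⟨t, ht, rfl⟩
        exact hPvs j₀ t (by exact_mod_cast ht)
      intro t ht
      obtain ⟨u, rfl⟩ := hfsurj t ht
      by_cases hu : (u:ℕ) < R-1
      · -- t is one of the kk's
        have hiR : (u:ℕ)+1 < R := by omega
        set i : Fin R := ⟨(u:ℕ)+1, hiR⟩ with hi
        have hj0D : (u:ℕ) < D := by omega
        set j₀ : Fin D := ⟨(u:ℕ), hj0D⟩ with hj0
        have hiv : (i:ℕ) = (u:ℕ)+1 := rfl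
        have hjv : (j₀:ℕ) = (u:ℕ) := rfl
        have hval1 : ((⟨(u:ℕ), hj0D⟩ : Fin D) : ℕ) = (u:ℕ) := rfl
        have hval2 : ((⟨(u:ℕ)+1, hiR⟩ : Fin R) : ℕ) = (u:ℕ)+1 := rfl
        have hu1 : (∑ j, α i j • z j) ∈ Pbig := by
          refine hAsub i ?_
          exact Set.finset_sum_mem_finset_sum _ _ _ fun j _ =>
            Set.smul_mem_smul_set (hz j)
        have hu0 : (∑ j, z j) ∈ Pbig := by
          refine hAsub ⟨0, hR⟩ ?_
          rw [hA0]
          exact Set.finset_sum_mem_finset_sum _ _ _ fun j _ => hz j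
        have hdz : (∑ j, α i j • z j) - (∑ j, z j) = z j₀ := by
          rw [← Finset.sum_sub_distrib, Finset.sum_eq_single j₀]
          · have : α i j₀ = 2 := by
              simp [α, hiv, hjv]
            rw [this, two_smul]; abel
          · intro b _ hb
            have hbv : (b:ℕ) ≠ (j₀:ℕ) := fun hh => hb (Fin.ext hh)
            have : α i b = 1 := by
              simp only [α]
              rw [if_neg (by omega)]
            rw [this, one_smul, sub_self]
          · intro h; exact absurd (Finset.mem_univ _) h
        have hzj : z j₀ ∈ vectorSpan ℝ Pbig := by
          have := vsub_mem_vectorSpan ℝ hu1 hu0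
          rwa [vsub_eq_sub, hdz] at this
        have hwj : w j₀ = e (kk ⟨(u:ℕ), hu⟩) := by
          simp only [w, hj0]
          rw [dif_pos hu]
        have hzw : z j₀ - w j₀ ∈ vectorSpan ℝ Pbig :=
          hJvs j₀ (hPsub j₀ _ (hz j₀))
        have : w j₀ ∈ vectorSpan ℝ Pbig := by
          have := Submodule.sub_mem _ hzj hzw
          simpa using this
        rw [hwj] at this
        have hkkt : kk ⟨(u:ℕ), hu⟩ = f u := congrArg f (Fin.ext rfl)
        rwa [hkkt] at this
      · -- t lies in some chunk J q
        have hMpos : 0 < M := by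
          have := u.isLt
          rcases Nat.eq_zero_or_pos M with hM | hM
          · exfalso
            have h0 : D * M = 0 := by rw [hM, Nat.mul_zero]
            omega
          · exact hM
        set a : ℕ := (u:ℕ) - (R-1) with ha
        have haDM : a < D * M := by have := u.isLt; omega
        have hq : a / M < D := by
          rw [Nat.div_lt_iff_lt_mul hMpos]
          omega
        have hs : a % M < M := Nat.mod_lt _ hMpos
        have hval : (R-1) + (a/M)*M + (a%M) = (u:ℕ) := by
          have := Nat.div_add_mod a M
          have hmm : (a/M)*M = M*(a/M) := Nat.mul_comm _ _
          omega
        have : f u ∈ J ⟨a/M, hq⟩ := by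
          refine Finset.mem_image.2 ⟨⟨a % M, hs⟩, Finset.mem_univ _, ?_⟩
          exact congrArg f (Fin.ext hval)
        exact hJvs ⟨a/M, hq⟩ (Submodule.subset_span ⟨f u, by exact_mod_cast this, rfl⟩)

/-- attainment of the dimension bound, with prescribed affine hull
`v + span{e_i : i ∈ I}`. -/
theorem Qhat_attains_affine_hull {n : ℕ} (ℓ : ℕ) (d r : ℕ → ℕ)
    (hr : ∀ k, 1 ≤ r k) (hdr : ∀ k, r k ≤ d k) (hn : mval d r ℓ ≤ n) :
    ∀ (v : Vec n) (I : Finset (Fin n)), I.card = mval d r ℓ →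
      ∃ P : Set (Vec n), IsPolytope P ∧ (P, ({0} : Set (Vec n))) ∈ Qhat n d r ℓ ∧
        (affineSpan ℝ P : Set (Vec n)) =
          v +ᵥ ((Submodule.span ℝ
            ((fun i => Pi.single i (1 : ℝ)) '' (I : Set (Fin n)))) : Set (Vec n)) := by
  intro v I hI
  obtain ⟨P, hpoly, hmem, hsub, hvs⟩ := key_span d r hr hdr ℓ v I hI
  refine ⟨P, hpoly, hmem, ?_⟩
  set U := Submodule.span ℝ ((fun i => Pi.single i (1:ℝ)) '' (I : Set (Fin n))) with hU
  have hUdir : U ≤ (affineSpan ℝ P).direction := by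
    rw [direction_affineSpan]
    exact Submodule.span_le.2 (by rintro x ⟨t, ht, rfl⟩; exact hvs t ht)
  obtain ⟨p, hp⟩ := hpoly.nonempty
  have hpA : p ∈ affineSpan ℝ P := subset_affineSpan ℝ P hp
  have hv : v ∈ affineSpan ℝ P := by
    have h1 : p - v ∈ U := hsub p hp
    have h2 := AffineSubspace.vadd_mem_of_mem_direction (hUdir (U.neg_mem h1)) hpA
    have h3 : (-(p - v)) +ᵥ p = v := by
      rw [vadd_eq_add]; abel
    rwa [h3] at h2
  apply subset_antisymm
  · have h1 : affineSpan ℝ P ≤ AffineSubspace.mk' v U := by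
      rw [affineSpan_le]
      intro x hx
      exact AffineSubspace.mem_mk'.2 (by rw [vsub_eq_sub]; exact hsub x hx)
    intro x hx
    have hx2 := h1 hx
    have hx3 : x -ᵥ v ∈ U := AffineSubspace.mem_mk'.1 hx2
    rw [vsub_eq_sub] at hx3
    exact Set.mem_vadd_set.2 ⟨x - v, hx3, by rw [vadd_eq_add]; abel⟩
  · intro x hx
    obtain ⟨u, hu, rfl⟩ := Set.mem_vadd_set.mp hx
    have h5 := AffineSubspace.vadd_mem_of_mem_direction (hUdir hu) hv
    have h4 : u +ᵥ v = v +ᵥ u := by rw [vadd_eq_add, vadd_eq_add]; abel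
    rwa [h4] at h5
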